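/- Let {π^i_j : B_i → B_{ij}} be a distributive family over a finite set J satisfying the cocycle condition. Then for any nonempty subset K ⊆ J, every compatible family (b_l)_{l∈K} (i.e., π^i_j(b_i) = π^j_i(b_j) for all distinct i,j ∈ K) extends to an element of the full multi-pullback B^π. -/

import Mathlib

open Function

/-- A set of ideals *generates a distributive lattice* iff it is contained in a
distributive sublattice of the lattice of ideals. -/
def GeneratesDistribLattice {A : Type*} [CommRing A] (s : Set (Ideal A)) : Prop :=
  ∃ L : Sublattice (Ideal A), (∀ I ∈ s, I ∈ L) ∧
    ∀ x ∈ L, ∀ y ∈ L, ∀ z ∈ L, x ⊓ (y ⊔ z) = (x ⊓ y) ⊔ (x ⊓ z)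

variable {J : Type*}

/-- Compatibility of `b i` and `b j`: `π^i_j (b i) = π^j_i (b j)`, where the
identification `B_{ij} = B_{ji}` is witnessed by the ring isomorphisms `e`. -/
def Compat (B : J → Type*) [∀ i, CommRing (B i)] (C : J → J → Type*)
    [∀ i j, CommRing (C i j)] (π : ∀ i j, B i →+* C i j)
    (e : ∀ i j, C i j ≃+* C j i) (i j : J) (bi : B i) (bj : B j) : Prop :=
  π i j bi = e j i (π j i bj)

/-- A *distributive family*: all the homomorphisms `π^i_j` are surjective and, for each
`i`, the kernels `ker π^i_j` generate a distributive lattice of ideals of `B i`. -/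
def DistribFamily (B : J → Type*) [∀ i, CommRing (B i)] (C : J → J → Type*)
    [∀ i j, CommRing (C i j)] (π : ∀ i j, B i →+* C i j) : Prop :=
  (∀ i j, i ≠ j → Surjective (π i j)) ∧
  ∀ i : J, GeneratesDistribLattice {I : Ideal (B i) | ∃ j, j ≠ i ∧ I = RingHom.ker (π i j)}

/-- The first cocycle condition: `π^i_j (ker π^i_k) = π^j_i (ker π^j_k)` for all
distinct `i, j, k` (the right-hand side is transported to `C i j` by `e`). -/
def Cocycle1 (B : J → Type*) [∀ i, CommRing (B i)] (C : J → J → Type*)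
    [∀ i j, CommRing (C i j)] (π : ∀ i j, B i →+* C i j)
    (e : ∀ i j, C i j ≃+* C j i) : Prop :=
  ∀ i j k : J, i ≠ j → i ≠ k → j ≠ k →
    Ideal.map (π i j) (RingHom.ker (π i k)) =
      Ideal.map ((e j i).toRingHom.comp (π j i)) (RingHom.ker (π j k))

/-- The second cocycle condition `φ^{ik}_j = φ^{ij}_k ∘ φ^{jk}_i`, expressed elementwise
via the characterization
`φ^{ij}_k ([b_j]^j_{ik}) = [b_i]^i_{jk} ↔ π^i_j(b_i) - π^j_i(b_j) ∈ π^i_j(ker π^i_k)`. -/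
def Cocycle2 (B : J → Type*) [∀ i, CommRing (B i)] (C : J → J → Type*)
    [∀ i j, CommRing (C i j)] (π : ∀ i j, B i →+* C i j)
    (e : ∀ i j, C i j ≃+* C j i) : Prop :=
  ∀ i j k : J, i ≠ j → i ≠ k → j ≠ k → ∀ (bi : B i) (bj : B j) (bk : B k),
    π j k bj - e k j (π k j bk) ∈ Ideal.map (π j k) (RingHom.ker (π j i)) →
    π i j bi - e j i (π j i bj) ∈ Ideal.map (π i j) (RingHom.ker (π i k)) →
    π i k bi - e k i (π k i bk) ∈ Ideal.map (π i k) (RingHom.ker (π i j))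

/-- The cocycle condition of Calow–Matthes. -/
def CocycleCondition (B : J → Type*) [∀ i, CommRing (B i)] (C : J → J → Type*)
    [∀ i j, CommRing (C i j)] (π : ∀ i j, B i →+* C i j)
    (e : ∀ i j, C i j ≃+* C j i) : Prop :=
  Cocycle1 B C π e ∧ Cocycle2 B C π e

/-- The two-element extension property: every compatible pair `(b_i, b_j)` extends by
some `b_k` compatible with both. -/
def ExtendsPairs (B : J → Type*) [∀ i, CommRing (B i)] (C : J → J → Type*)
    [∀ i j, CommRing (C i j)] (π : ∀ i j, B i →+* C i j)
    (e : ∀ i j, C i j ≃+* C j i) : Prop :=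
  ∀ i j k : J, i ≠ j → i ≠ k → j ≠ k → ∀ (bi : B i) (bj : B j),
    Compat B C π e i j bi bj →
    ∃ bk : B k, Compat B C π e i k bi bk ∧ Compat B C π e j k bj bk

section CRT
variable {A : Type*} [CommRing A] {ι : Type*} [DecidableEq ι]

lemma my_distrib3 (L : Sublattice (Ideal A))
    (hL : ∀ x ∈ L, ∀ y ∈ L, ∀ z ∈ L, x ⊓ (y ⊔ z) = (x ⊓ y) ⊔ (x ⊓ z))
    {x y z : Ideal A} (hx : x ∈ L) (hy : y ∈ L) (hz : z ∈ L) :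
    x ⊔ (y ⊓ z) = (x ⊔ y) ⊓ (x ⊔ z) := by
  have h1 : (x ⊔ y) ⊓ (x ⊔ z) = ((x ⊔ y) ⊓ x) ⊔ ((x ⊔ y) ⊓ z) :=
    hL _ (L.supClosed hx hy) _ hx _ hz
  have h2 : z ⊓ (x ⊔ y) = (z ⊓ x) ⊔ (z ⊓ y) := hL _ hz _ hx _ hy
  have h3 : (x ⊔ y) ⊓ x = x := inf_eq_right.mpr le_sup_left
  rw [h1, h3, inf_comm (x ⊔ y) z, h2]
  rw [inf_comm z x, inf_comm z y, ← sup_assoc, sup_inf_self]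

lemma my_infMem (L : Sublattice (Ideal A)) {s : Finset ι} (hs : s.Nonempty)
    {I : ι → Ideal A} (hI : ∀ i ∈ s, I i ∈ L) : s.inf' hs I ∈ L := by
  induction hs using Finset.Nonempty.cons_induction with
  | singleton a => simpa using hI a (by simp)
  | cons a s ha hs ih =>
    rw [Finset.inf'_cons hs]
    exact L.infClosed (hI a (by simp)) (ih fun i hi => hI i (by simp [hi]))

lemma my_distribFin (L : Sublattice (Ideal A))
    (hL : ∀ x ∈ L, ∀ y ∈ L, ∀ z ∈ L, x ⊓ (y ⊔ z) = (x ⊓ y) ⊔ (x ⊓ z))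
    {s : Finset ι} (hs : s.Nonempty) {I : ι → Ideal A} (hI : ∀ i ∈ s, I i ∈ L)
    {J : Ideal A} (hJ : J ∈ L) :
    J ⊔ s.inf' hs I = s.inf' hs fun i => J ⊔ I i := by
  induction hs using Finset.Nonempty.cons_induction with
  | singleton a => simp
  | cons a s ha hs ih =>
    rw [Finset.inf'_cons hs, Finset.inf'_cons hs,
      my_distrib3 L hL hJ (hI a (by simp)) (my_infMem L hs fun i hi => hI i (by simp [hi])),
      ih fun i hi => hI i (by simp [hi])]

lemma my_crt (L : Sublattice (Ideal A))
    (hL : ∀ x ∈ L, ∀ y ∈ L, ∀ z ∈ L, x ⊓ (y ⊔ z) = (x ⊓ y) ⊔ (x ⊓ z))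
    (I : ι → Ideal A) (a : ι → A) :
    ∀ s : Finset ι, (∀ i ∈ s, I i ∈ L) →
    (∀ i ∈ s, ∀ j ∈ s, a i - a j ∈ I i ⊔ I j) →
    ∃ x : A, ∀ i ∈ s, x - a i ∈ I i := by
  intro s
  induction s using Finset.induction with
  | empty => exact fun _ _ => ⟨0, by simp⟩
  | @insert j s hj ih =>
    intro hmem hcomp
    obtain ⟨x', hx'⟩ := ih (fun i hi => hmem i (Finset.mem_insert_of_mem hi))
      (fun i hi j' hj' => hcomp i (Finset.mem_insert_of_mem hi) j' (Finset.mem_insert_of_mem hj'))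
    rcases s.eq_empty_or_nonempty with rfl | hs
    · exact ⟨a j, fun i hi => by
        rw [Finset.mem_insert] at hi
        rcases hi with rfl | hi
        · simpa using (I i).zero_mem
        · simp at hi⟩
    · have hw : x' - a j ∈ s.inf' hs fun i => I j ⊔ I i := by
        rw [Finset.inf'_eq_inf]
        rw [Submodule.mem_finsetInf]
        intro i hi
        have h1 : x' - a i ∈ I i := hx' i hi
        have h2 : a i - a j ∈ I i ⊔ I j :=
          hcomp i (Finset.mem_insert_of_mem hi) j (Finset.mem_insert_self _ _)
        have : x' - a j = (x' - a i) + (a i - a j) := by ring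
        rw [this, sup_comm]
        exact Submodule.add_mem _ (Submodule.mem_sup_left h1) h2
      rw [← my_distribFin L hL hs (fun i hi => hmem i (Finset.mem_insert_of_mem hi))
        (hmem j (Finset.mem_insert_self _ _))] at hw
      obtain ⟨y, hy, z, hz, hyz⟩ := Submodule.mem_sup.mp hw
      refine ⟨x' - z, fun i hi => ?_⟩
      rw [Finset.mem_insert] at hi
      rcases hi with rfl | hi
      · have h4 : x' - z - a i = (x' - a i) - z := by ring
        rw [h4, ← hyz, add_sub_cancel_right]; exact hy
      · have : x' - z - a i = (x' - a i) - z := by ring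
        rw [this]
        exact Submodule.sub_mem _ (hx' i hi) (Finset.inf'_le I hi hz)

end CRT

section Aux
variable {J : Type*}

lemma my_extend_one [DecidableEq J] (B : J → Type*) [∀ i, CommRing (B i)]
    (C : J → J → Type*) [∀ i j, CommRing (C i j)]
    (π : ∀ i j, B i →+* C i j) (e : ∀ i j, C i j ≃+* C j i)
    (he : ∀ i j, e j i = (e i j).symm)
    (hsurj : ∀ i j, i ≠ j → Surjective (π i j))
    (hgen : ∀ i : J, ∃ L : Sublattice (Ideal (B i)),
      (∀ I ∈ {I : Ideal (B i) | ∃ j, j ≠ i ∧ I = RingHom.ker (π i j)}, I ∈ L) ∧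
      ∀ x ∈ L, ∀ y ∈ L, ∀ z ∈ L, x ⊓ (y ⊔ z) = (x ⊓ y) ⊔ (x ⊓ z))
    (hc1 : ∀ i j k : J, i ≠ j → i ≠ k → j ≠ k →
      Ideal.map (π i j) (RingHom.ker (π i k)) =
        Ideal.map ((e j i).toRingHom.comp (π j i)) (RingHom.ker (π j k)))
    (hc2 : ∀ i j k : J, i ≠ j → i ≠ k → j ≠ k → ∀ (bi : B i) (bj : B j) (bk : B k),
      π j k bj - e k j (π k j bk) ∈ Ideal.map (π j k) (RingHom.ker (π j i)) →
      π i j bi - e j i (π j i bj) ∈ Ideal.map (π i j) (RingHom.ker (π i k)) →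
      π i k bi - e k i (π k i bk) ∈ Ideal.map (π i k) (RingHom.ker (π i j)))
    (K : Finset J) (k : J) (hk : k ∉ K) (b : ∀ l, B l)
    (hb : ∀ i ∈ K, ∀ j ∈ K, i ≠ j → Compat B C π e i j (b i) (b j)) :
    ∃ y : B k, ∀ i ∈ K, π k i y = e i k (π i k (b i)) := by
  classical
  obtain ⟨L, hLmem, hLdist⟩ := hgen k
  have hki : ∀ i ∈ K, k ≠ i := fun i hi h => hk (h ▸ hi)
  have hx : ∀ i : J, ∃ x : B k, i ∈ K → π k i x = e i k (π i k (b i)) := by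
    intro i
    by_cases hi : i ∈ K
    · obtain ⟨x, hxe⟩ := hsurj k i (hki i hi) (e i k (π i k (b i)))
      exact ⟨x, fun _ => hxe⟩
    · exact ⟨0, fun h => absurd h hi⟩
  choose x hxeq using hx
  have hIL : ∀ i ∈ K, RingHom.ker (π k i) ∈ L := fun i hi =>
    hLmem _ ⟨i, fun h => hk (h ▸ hi), rfl⟩
  have hcomp : ∀ i ∈ K, ∀ j ∈ K,
      x i - x j ∈ RingHom.ker (π k i) ⊔ RingHom.ker (π k j) := by
    intro i hi j hj
    by_cases hij : i = j
    · subst hij; rw [sub_self]; exact Submodule.zero_mem _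
    have hik : i ≠ k := fun h => (hki i hi) h.symm
    have hjk : j ≠ k := fun h => (hki j hj) h.symm
    have hyp1 : π j k (b j) - e k j (π k j (x j)) ∈
        Ideal.map (π j k) (RingHom.ker (π j i)) := by
      rw [hxeq j hj, he j k, RingEquiv.symm_apply_apply, sub_self]
      exact Submodule.zero_mem _
    have hyp2 : π i j (b i) - e j i (π j i (b j)) ∈
        Ideal.map (π i j) (RingHom.ker (π i k)) := by
      rw [hb i hi j hj hij, sub_self]
      exact Submodule.zero_mem _
    have concl := hc2 i j k hij hik hjk (b i) (b j) (x j) hyp1 hyp2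
    rw [hc1 i k j hik hij (fun h => hjk h.symm), ← Ideal.map_map] at concl
    rw [Ideal.mem_map_iff_of_surjective ((e k i).toRingHom : C k i →+* C i k)
      (e k i).surjective] at concl
    obtain ⟨w, hw, hweq⟩ := concl
    have hwx : w = π k i (x i) - π k i (x j) := by
      have hweq' : e k i w = π i k (b i) - e k i (π k i (x j)) := hweq
      have h5 := congrArg (e k i).symm hweq'
      rw [RingEquiv.symm_apply_apply] at h5
      rw [h5, map_sub, RingEquiv.symm_apply_apply, he i k, RingEquiv.symm_symm,
        ← hxeq i hi]
    rw [Ideal.mem_map_iff_of_surjective (π k i) (hsurj k i (hki i hi))] at hw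
    obtain ⟨v, hv, hveq⟩ := hw
    have hker : x i - x j - v ∈ RingHom.ker (π k i) := by
      rw [RingHom.mem_ker, map_sub, map_sub, hveq, hwx]
      ring
    have : x i - x j = (x i - x j - v) + v := by ring
    rw [this]
    exact Submodule.add_mem _ (Submodule.mem_sup_left hker) (Submodule.mem_sup_right hv)
  obtain ⟨y, hy⟩ := my_crt L hLdist (fun i => RingHom.ker (π k i)) x K hIL hcomp
  refine ⟨y, fun i hi => ?_⟩
  have := hy i hi
  rw [RingHom.sub_mem_ker_iff] at this
  rw [this, hxeq i hi]


end Aux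

/-- for a distributive family satisfying the cocycle condition, every
compatible family defined on a nonempty subset `K ⊆ J` extends to an element of the
full multi-pullback. -/
theorem stmt16 [Fintype J] [DecidableEq J] (B : J → Type*) [∀ i, CommRing (B i)]
    (C : J → J → Type*) [∀ i j, CommRing (C i j)]
    (π : ∀ i j, B i →+* C i j) (e : ∀ i j, C i j ≃+* C j i)
    (he : ∀ i j, e j i = (e i j).symm)
    (hdist : DistribFamily B C π)
    (hcoc : CocycleCondition B C π e) :
    ∀ K : Finset J, K.Nonempty → ∀ b : ∀ l, B l,
      (∀ i ∈ K, ∀ j ∈ K, i ≠ j → Compat B C π e i j (b i) (b j)) →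
      ∃ c : ∀ l, B l, (∀ i j, i ≠ j → Compat B C π e i j (c i) (c j)) ∧
        ∀ l ∈ K, c l = b l := by
  
  classical
  obtain ⟨hsurj, hgen⟩ := hdist
  obtain ⟨hc1, hc2⟩ := hcoc
  suffices H : ∀ n (K : Finset J), Kᶜ.card = n → ∀ b : ∀ l, B l,
      (∀ i ∈ K, ∀ j ∈ K, i ≠ j → Compat B C π e i j (b i) (b j)) →
      ∃ c : ∀ l, B l, (∀ i j, i ≠ j → Compat B C π e i j (c i) (c j)) ∧
        ∀ l ∈ K, c l = b l by
    intro K _ b hb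
    exact H _ K rfl b hb
  intro n
  induction n with
  | zero =>
    intro K hK b hb
    have hKu : K = Finset.univ := by
      rwa [Finset.card_eq_zero, Finset.compl_eq_empty_iff] at hK
    exact ⟨b, fun i j hij =>
      hb i (hKu ▸ Finset.mem_univ i) j (hKu ▸ Finset.mem_univ j) hij, fun l _ => rfl⟩
  | succ n ih =>
    intro K hK b hb
    have hne : Kᶜ.Nonempty := by rw [← Finset.card_pos, hK]; omega
    obtain ⟨k, hkc⟩ := hne
    have hk : k ∉ K := Finset.mem_compl.mp hkc
    obtain ⟨y, hy⟩ := my_extend_one B C π e he hsurj hgen hc1 hc2 K k hk b hb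
    set b' : ∀ l, B l := Function.update b k y with hb'def
    have hbK : ∀ i ∈ K, b' i = b i := fun i hi =>
      Function.update_of_ne (by rintro rfl; exact hk hi) _ _
    have hb'k : b' k = y := Function.update_self _ _ _
    have hb'compat : ∀ i ∈ insert k K, ∀ j ∈ insert k K, i ≠ j →
        Compat B C π e i j (b' i) (b' j) := by
      intro i hi j hj hij
      rcases Finset.mem_insert.mp hi with hik | hi'
      · subst hik
        rcases Finset.mem_insert.mp hj with hjk | hj'
        · exact absurd hjk.symm hij
        · show π i j (b' i) = e j i (π j i (b' j))
          rw [hb'k, hbK j hj']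
          exact hy j hj'
      · rcases Finset.mem_insert.mp hj with hjk | hj'
        · subst hjk
          show π i j (b' i) = e j i (π j i (b' j))
          rw [hb'k, hbK i hi', hy i hi', he i j, RingEquiv.symm_apply_apply]
        · show π i j (b' i) = e j i (π j i (b' j))
          rw [hbK i hi', hbK j hj']
          exact hb i hi' j hj' hij
    have hcard : (insert k K)ᶜ.card = n := by
      rw [Finset.compl_insert, Finset.card_erase_of_mem hkc, hK]
      omega
    obtain ⟨c, hc, hcl⟩ := ih (insert k K) hcard b' hb'compat
    exact ⟨c, hc, fun l hl => (hcl l (Finset.mem_insert_of_mem hl)).trans (hbK l hl)⟩
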